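/- arXiv:1205.6018 — 5 statements merged into one kernel-verified Lean document; each statement's English description precedes it below -/
import Mathlib

section
/- If h₁ : ℝⁿ → ℝ is non-negative, integrable, and symmetric unimodal about 0, and h₂ : ℝⁿ → ℝ is a probability density symmetric unimodal about 0, then h₁ * h₂ is symmetric unimodal about 0: there exists a non-increasing function ψ : [0,∞) → ℝ with (h₁ * h₂)(x) = ψ(‖x‖) for all x. -/
open MeasureTheory Set
open scoped ENNReal

noncomputable def conv {n : ℕ} (f g : EuclideanSpace ℝ (Fin n) → ℝ) :
    EuclideanSpace ℝ (Fin n) → ℝ :=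
  fun x => ∫ z, f z * g (x - z)

def SymmUnimodal {n : ℕ} (f : EuclideanSpace ℝ (Fin n) → ℝ) : Prop :=
  ∃ φ : ℝ → ℝ, AntitoneOn φ (Set.Ici 0) ∧ ∀ x, f x = φ ‖x‖

lemma min_max_ineq {α β r s : ℝ} (hr : 0 ≤ r) (hrs : r ≤ s) :
    min α (s + β) - max (-α) (s - β) ≤ min α (r + β) - max (-α) (r - β) := by
  simp only [min_def, max_def]; split_ifs <;> linarith

/-- Key 1-D lemma: for symmetric-decreasing sets `S T ⊆ ℝ`, the measure of
`S ∩ (c + T)` is antitone in `c ≥ 0`. -/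
lemma slice_ineq {S T : Set ℝ}
    (hS : ∀ t t' : ℝ, |t'| ≤ |t| → t ∈ S → t' ∈ S)
    (hT : ∀ t t' : ℝ, |t'| ≤ |t| → t ∈ T → t' ∈ T)
    {r s : ℝ} (hr : 0 ≤ r) (hrs : r ≤ s) :
    volume (S ∩ {t | t - s ∈ T}) ≤ volume (S ∩ {t | t - r ∈ T}) := by
  have htrans : ∀ c : ℝ, {t : ℝ | t - c ∈ T} = (fun t => t + (-c)) ⁻¹' T := by
    intro c; ext t; simp [sub_eq_add_neg]
  by_cases hbS : BddAbove (abs '' S)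
  · by_cases hbT : BddAbove (abs '' T)
    · -- both bounded
      set α := sSup (insert 0 (abs '' S)) with hαdef
      set β := sSup (insert 0 (abs '' T)) with hβdef
      have hbS' : BddAbove (insert 0 (abs '' S)) := hbS.insert 0
      have hbT' : BddAbove (insert 0 (abs '' T)) := hbT.insert 0
      have hSsub : S ⊆ Icc (-α) α := by
        intro t ht
        exact abs_le.mp (le_csSup hbS' (mem_insert_of_mem _ ⟨t, ht, rfl⟩))
      have hTsub : T ⊆ Icc (-β) β := by
        intro t ht
        exact abs_le.mp (le_csSup hbT' (mem_insert_of_mem _ ⟨t, ht, rfl⟩))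
      have hsubS : Ioo (-α) α ⊆ S := by
        intro t ht
        have h1 : |t| < α := abs_lt.mpr ⟨ht.1, ht.2⟩
        obtain ⟨y, hy, hty⟩ := exists_lt_of_lt_csSup (insert_nonempty _ _) h1
        rcases hy with rfl | ⟨t₀, ht₀, rfl⟩
        · exact absurd hty (not_lt.mpr (abs_nonneg t))
        · exact hS t₀ t hty.le ht₀
      have hsubT : Ioo (-β) β ⊆ T := by
        intro t ht
        have h1 : |t| < β := abs_lt.mpr ⟨ht.1, ht.2⟩
        obtain ⟨y, hy, hty⟩ := exists_lt_of_lt_csSup (insert_nonempty _ _) h1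
        rcases hy with rfl | ⟨t₀, ht₀, rfl⟩
        · exact absurd hty (not_lt.mpr (abs_nonneg t))
        · exact hT t₀ t hty.le ht₀
      calc volume (S ∩ {t | t - s ∈ T})
          ≤ volume (Icc (-α) α ∩ Icc (s - β) (s + β)) := by
            refine measure_mono (inter_subset_inter hSsub ?_)
            intro t ht
            have := hTsub ht
            constructor <;> [linarith [this.1]; linarith [this.2]]
        _ = ENNReal.ofReal (min α (s + β) - max (-α) (s - β)) := by
            rw [Icc_inter_Icc, Real.volume_Icc]
        _ ≤ ENNReal.ofReal (min α (r + β) - max (-α) (r - β)) :=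
            ENNReal.ofReal_le_ofReal (min_max_ineq hr hrs)
        _ = volume (Ioo (-α) α ∩ Ioo (r - β) (r + β)) := by
            rw [Ioo_inter_Ioo, Real.volume_Ioo]
        _ ≤ volume (S ∩ {t | t - r ∈ T}) := by
            refine measure_mono (inter_subset_inter hsubS ?_)
            intro t ht
            exact hsubT ⟨by linarith [ht.1], by linarith [ht.2]⟩
    · -- T unbounded : T = univ
      have hTuniv : T = univ := by
        ext t; simp only [mem_univ, iff_true]
        obtain ⟨y, hy, hty⟩ := not_bddAbove_iff.mp hbT |t|
        obtain ⟨t₀, ht₀, rfl⟩ := hy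
        exact hT t₀ t hty.le ht₀
      simp [hTuniv]
  · -- S unbounded : S = univ
    have hSuniv : S = univ := by
      ext t; simp only [mem_univ, iff_true]
      obtain ⟨y, hy, hty⟩ := not_bddAbove_iff.mp hbS |t|
      obtain ⟨t₀, ht₀, rfl⟩ := hy
      exact hS t₀ t hty.le ht₀
    rw [hSuniv, univ_inter, univ_inter, htrans s, htrans r,
      measure_preimage_add_right, measure_preimage_add_right]

variable {m : ℕ}
noncomputable abbrev ee (m : ℕ) : EuclideanSpace ℝ (Fin (m+1)) ≃ᵐ ℝ × (Fin m → ℝ) :=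
  (MeasurableEquiv.toLp 2 (Fin (m+1) → ℝ)).symm.trans
    (MeasurableEquiv.piFinSuccAbove (fun _ => ℝ) 0)

lemma ee_symm_apply (t : ℝ) (w : Fin m → ℝ) (i : Fin (m+1)) :
    ((ee m).symm (t, w)) i = (Fin.cons t w : Fin (m+1) → ℝ) i := by
  show ((MeasurableEquiv.toLp 2 (Fin (m+1) → ℝ)).symm.symm
      ((MeasurableEquiv.piFinSuccAbove (fun _ => ℝ) 0).symm (t, w))) i = _
  rw [MeasurableEquiv.piFinSuccAbove_symm_apply]
  simp [Fin.insertNthEquiv, Fin.insertNth_zero, MeasurableEquiv.coe_toLp]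

lemma ee_symm_sub (t c : ℝ) (w : Fin m → ℝ) :
    (ee m).symm (t, w) - c • (EuclideanSpace.single 0 1 : EuclideanSpace ℝ (Fin (m+1)))
      = (ee m).symm (t - c, w) := by
  ext i
  simp only [PiLp.sub_apply, PiLp.smul_apply, EuclideanSpace.single_apply, smul_eq_mul,
    ee_symm_apply]
  induction i using Fin.cases with
  | zero => simp
  | succ j => simp [Fin.succ_ne_zero]

lemma ee_norm_le {t t' : ℝ} (h : |t'| ≤ |t|) (w : Fin m → ℝ) :
    ‖(ee m).symm (t', w)‖ ≤ ‖(ee m).symm (t, w)‖ := by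
  rw [EuclideanSpace.norm_eq, EuclideanSpace.norm_eq]
  apply Real.sqrt_le_sqrt
  rw [Fin.sum_univ_succ, Fin.sum_univ_succ]
  simp only [ee_symm_apply, Fin.cons_zero, Fin.cons_succ]
  have : ‖t'‖ ^ 2 ≤ ‖t‖ ^ 2 := by
    rw [Real.norm_eq_abs, Real.norm_eq_abs, sq_abs, sq_abs, ← sq_abs t', ← sq_abs t]
    exact pow_le_pow_left₀ (abs_nonneg _) h 2
  linarith

lemma vol_inter_le {A B : Set (EuclideanSpace ℝ (Fin (m+1)))}
    (hA : MeasurableSet A) (hB : MeasurableSet B)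
    (hAr : ∀ z z' : EuclideanSpace ℝ (Fin (m+1)), ‖z'‖ ≤ ‖z‖ → z ∈ A → z' ∈ A)
    (hBr : ∀ z z' : EuclideanSpace ℝ (Fin (m+1)), ‖z'‖ ≤ ‖z‖ → z ∈ B → z' ∈ B)
    {r s : ℝ} (hr : 0 ≤ r) (hrs : r ≤ s) :
    volume (A ∩ {z | z - s • (EuclideanSpace.single 0 1 : EuclideanSpace ℝ (Fin (m+1))) ∈ B})
      ≤ volume (A ∩ {z | z - r • (EuclideanSpace.single 0 1 : EuclideanSpace ℝ (Fin (m+1))) ∈ B}) := by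
  have mp : MeasurePreserving ((ee m).symm) volume volume :=
    ((EuclideanSpace.volume_preserving_symm_measurableEquiv_toLp _).trans
      (volume_preserving_piFinSuccAbove _ 0)).symm
  have hmeas : ∀ c : ℝ, MeasurableSet
      (A ∩ {z | z - c • (EuclideanSpace.single 0 1 : EuclideanSpace ℝ (Fin (m+1))) ∈ B}) := by
    intro c
    exact hA.inter (hB.preimage (measurable_id.sub_const _))
  have key : ∀ c : ℝ,
      volume (A ∩ {z | z - c • (EuclideanSpace.single 0 1 : EuclideanSpace ℝ (Fin (m+1))) ∈ B})
        = ∫⁻ w : Fin m → ℝ, volume ({t | (ee m).symm (t, w) ∈ A} ∩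
            {t | t - c ∈ {τ | (ee m).symm (τ, w) ∈ B}}) := by
    intro c
    rw [← mp.measure_preimage (hmeas c).nullMeasurableSet]
    rw [Measure.volume_eq_prod, Measure.prod_apply_symm
      ((mp.measurable) (hmeas c))]
    congr 1
    ext w
    congr 1
    ext t
    simp only [mem_preimage, mem_inter_iff, mem_setOf_eq, ee_symm_sub]
  rw [key s, key r]
  refine lintegral_mono fun w => ?_
  refine slice_ineq ?_ ?_ hr hrs
  · exact fun t t' h ht => hAr _ _ (ee_norm_le h w) ht
  · exact fun t t' h ht => hBr _ _ (ee_norm_le h w) ht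

lemma conv_mono {h₁ h₂ : EuclideanSpace ℝ (Fin (m+1)) → ℝ}
    {φ₁ φ₂ : ℝ → ℝ} (hφ₁ : Antitone φ₁) (hφ₂ : Antitone φ₂)
    (hrep₁ : ∀ x, h₁ x = φ₁ ‖x‖) (hrep₂ : ∀ x, h₂ x = φ₂ ‖x‖)
    (h₁nn : ∀ x, 0 ≤ h₁ x) (h₂nn : ∀ x, 0 ≤ h₂ x)
    (h₁int : Integrable h₁)
    {r s : ℝ} (hr : 0 ≤ r) (hrs : r ≤ s) :
    conv h₁ h₂ (s • (EuclideanSpace.single 0 1 : EuclideanSpace ℝ (Fin (m+1))))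
      ≤ conv h₁ h₂ (r • (EuclideanSpace.single 0 1 : EuclideanSpace ℝ (Fin (m+1)))) := by
  set u : EuclideanSpace ℝ (Fin (m+1)) := EuclideanSpace.single 0 1 with hu
  have meas₁ : Measurable h₁ := by
    have : h₁ = φ₁ ∘ (fun x => ‖x‖) := funext hrep₁
    rw [this]; exact hφ₁.measurable.comp measurable_norm
  have meas₂ : Measurable h₂ := by
    have : h₂ = φ₂ ∘ (fun x => ‖x‖) := funext hrep₂
    rw [this]; exact hφ₂.measurable.comp measurable_norm
  have h₂even : ∀ x z : EuclideanSpace ℝ (Fin (m+1)), h₂ (x - z) = h₂ (z - x) := by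
    intro x z; rw [hrep₂, hrep₂, norm_sub_rev]
  have aesm : ∀ x : EuclideanSpace ℝ (Fin (m+1)),
      AEStronglyMeasurable (fun z => h₁ z * h₂ (x - z)) volume := by
    intro x
    exact (meas₁.mul (meas₂.comp (measurable_const.sub measurable_id))).aestronglyMeasurable
  have hint : ∀ x : EuclideanSpace ℝ (Fin (m+1)),
      Integrable (fun z => h₁ z * h₂ (x - z)) := by
    intro x
    refine (h₁int.mul_const (φ₂ 0)).mono (aesm x) (Filter.Eventually.of_forall fun z => ?_)
    rw [Real.norm_eq_abs, Real.norm_eq_abs,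
      abs_of_nonneg (mul_nonneg (h₁nn z) (h₂nn _))]
    refine le_trans (mul_le_mul_of_nonneg_left ?_ (h₁nn z)) (le_abs_self _)
    rw [hrep₂]
    exact hφ₂ (norm_nonneg _)
  have conv_eq : ∀ x : EuclideanSpace ℝ (Fin (m+1)),
      conv h₁ h₂ x = (∫⁻ z, ENNReal.ofReal (h₁ z * h₂ (x - z))).toReal := by
    intro x
    exact integral_eq_lintegral_of_nonneg_ae
      (Filter.Eventually.of_forall fun z => mul_nonneg (h₁nn z) (h₂nn _)) (aesm x)
  -- the layer-cake representation
  set Q : EuclideanSpace ℝ (Fin (m+1)) → Set (EuclideanSpace ℝ (Fin (m+1)) × (ℝ × ℝ)) :=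
    fun x => {q | (0 < q.2.1 ∧ q.2.1 < h₁ q.1) ∧ (0 < q.2.2 ∧ q.2.2 < h₂ (x - q.1))} with hQ
  have Qmeas : ∀ x, MeasurableSet (Q x) := by
    intro x
    refine MeasurableSet.inter (MeasurableSet.inter ?_ ?_) (MeasurableSet.inter ?_ ?_)
    · exact measurableSet_lt measurable_const (measurable_fst.comp measurable_snd)
    · exact measurableSet_lt (measurable_fst.comp measurable_snd) (meas₁.comp measurable_fst)
    · exact measurableSet_lt measurable_const (measurable_snd.comp measurable_snd)
    · exact measurableSet_lt (measurable_snd.comp measurable_snd)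
        (meas₂.comp (measurable_const.sub measurable_fst))
  have layer : ∀ x : EuclideanSpace ℝ (Fin (m+1)),
      ∫⁻ z, ENNReal.ofReal (h₁ z * h₂ (x - z))
        = ∫⁻ p : ℝ × ℝ, volume {z | (z, p) ∈ Q x} := by
    intro x
    have stepA : ∀ z : EuclideanSpace ℝ (Fin (m+1)),
        ENNReal.ofReal (h₁ z * h₂ (x - z)) = ∫⁻ p : ℝ × ℝ, (Q x).indicator 1 (z, p) := by
      intro z
      have hset : (fun p : ℝ × ℝ => (Q x).indicator 1 (z, p))
          = (Ioo (0:ℝ) (h₁ z) ×ˢ Ioo (0:ℝ) (h₂ (x - z))).indicator (1 : ℝ × ℝ → ℝ≥0∞) := by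
        funext p
        by_cases hp : (z, p) ∈ Q x
        · have hp0 : (0 < p.1 ∧ p.1 < h₁ z) ∧ (0 < p.2 ∧ p.2 < h₂ (x - z)) := hp
          have hp' : p ∈ Ioo (0:ℝ) (h₁ z) ×ˢ Ioo (0:ℝ) (h₂ (x - z)) := by
            rw [mem_prod, mem_Ioo, mem_Ioo]; exact hp0
          rw [indicator_of_mem hp, indicator_of_mem hp']
          rfl
        · have hp' : p ∉ Ioo (0:ℝ) (h₁ z) ×ˢ Ioo (0:ℝ) (h₂ (x - z)) := by
            intro hcon
            rw [mem_prod, mem_Ioo, mem_Ioo] at hcon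
            exact hp (⟨hcon.1, hcon.2⟩ : (0 < p.1 ∧ p.1 < h₁ z) ∧ (0 < p.2 ∧ p.2 < h₂ (x - z)))
          rw [indicator_of_notMem hp, indicator_of_notMem hp']
      rw [hset, lintegral_indicator_one (measurableSet_Ioo.prod measurableSet_Ioo),
        Measure.volume_eq_prod, Measure.prod_prod, Real.volume_Ioo, Real.volume_Ioo,
        sub_zero, sub_zero, ← ENNReal.ofReal_mul (h₁nn z)]
    simp_rw [stepA]
    rw [lintegral_lintegral_swap]
    · congr 1
      funext p
      have hslice : MeasurableSet {z | (z, p) ∈ Q x} :=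
        (measurable_id.prodMk measurable_const) (Qmeas x)
      have heq : (fun z => (Q x).indicator (1 : (EuclideanSpace ℝ (Fin (m+1)) × ℝ × ℝ) → ℝ≥0∞) (z, p))
          = ({z | (z, p) ∈ Q x}).indicator 1 := by
        funext z
        simp only [indicator_apply, mem_setOf_eq, Pi.one_apply]
      rw [heq, lintegral_indicator_one hslice]
    · have : Function.uncurry (fun z (p : ℝ × ℝ) => (Q x).indicator (1 : (EuclideanSpace ℝ (Fin (m+1)) × ℝ × ℝ) → ℝ≥0∞) (z, p))
          = (Q x).indicator 1 := by
        funext q; cases q; rfl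
      rw [this]
      exact (measurable_one.indicator (Qmeas x)).aemeasurable
  -- pointwise comparison
  have ptwise : ∀ p : ℝ × ℝ,
      volume {z | (z, p) ∈ Q (s • u)} ≤ volume {z | (z, p) ∈ Q (r • u)} := by
    intro p
    by_cases hp : 0 < p.1 ∧ 0 < p.2
    · have hseteq : ∀ c : ℝ, {z | (z, p) ∈ Q (c • u)}
          = {z | p.1 < h₁ z} ∩ {z | z - c • u ∈ {w | p.2 < h₂ w}} := by
        intro c
        ext z
        simp only [hQ, mem_setOf_eq, mem_inter_iff]
        constructor
        · rintro ⟨⟨-, hz1⟩, -, hz2⟩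
          exact ⟨hz1, by rwa [← h₂even]⟩
        · rintro ⟨hz1, hz2⟩
          exact ⟨⟨hp.1, hz1⟩, hp.2, by rwa [h₂even]⟩
      rw [hseteq s, hseteq r]
      refine vol_inter_le (meas₁ measurableSet_Ioi) (meas₂ measurableSet_Ioi) ?_ ?_ hr hrs
      · intro z z' hle hz
        simp only [mem_setOf_eq] at *
        calc p.1 < h₁ z := hz
          _ ≤ h₁ z' := by rw [hrep₁, hrep₁]; exact hφ₁ hle
      · intro z z' hle hz
        simp only [mem_setOf_eq] at *
        calc p.2 < h₂ z := hz
          _ ≤ h₂ z' := by rw [hrep₂, hrep₂]; exact hφ₂ hle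
    · have hempty : ∀ c : ℝ, {z | (z, p) ∈ Q (c • u)} = (∅ : Set _) := by
        intro c
        ext z
        simp only [hQ, mem_setOf_eq, mem_empty_iff_false, iff_false]
        rintro ⟨⟨hp1, -⟩, hp2, -⟩
        exact hp ⟨hp1, hp2⟩
      rw [hempty s, hempty r]
  -- finiteness at r
  have hfin : ∫⁻ z, ENNReal.ofReal (h₁ z * h₂ (r • u - z)) < ⊤ := by
    refine lt_of_le_of_lt (lintegral_mono fun z => ?_) (hint (r • u)).2
    exact Real.ofReal_le_enorm _
  rw [conv_eq, conv_eq]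
  refine ENNReal.toReal_mono (by rw [layer] at hfin ⊢; exact hfin.ne) ?_
  rw [layer, layer]
  exact lintegral_mono ptwise

lemma SymmUnimodal.exists_antitone {n : ℕ} {h : EuclideanSpace ℝ (Fin n) → ℝ}
    (hs : SymmUnimodal h) : ∃ φ : ℝ → ℝ, Antitone φ ∧ ∀ x, h x = φ ‖x‖ := by
  obtain ⟨φ, hφ, hrep⟩ := hs
  refine ⟨fun ρ => φ (max ρ 0), ?_, ?_⟩
  · intro a b hab
    exact hφ (mem_Ici.mpr (le_max_right a 0)) (mem_Ici.mpr (le_max_right b 0))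
      (max_le_max hab le_rfl)
  · intro x
    rw [hrep]
    simp only [max_eq_left (norm_nonneg x)]

lemma conv_rot {n : ℕ} {h₁ h₂ : EuclideanSpace ℝ (Fin n) → ℝ}
    {φ₁ φ₂ : ℝ → ℝ}
    (hrep₁ : ∀ x, h₁ x = φ₁ ‖x‖) (hrep₂ : ∀ x, h₂ x = φ₂ ‖x‖)
    {x y : EuclideanSpace ℝ (Fin n)} (hxy : ‖x‖ = ‖y‖) :
    conv h₁ h₂ x = conv h₁ h₂ y := by
  set e : EuclideanSpace ℝ (Fin n) ≃ₗᵢ[ℝ] EuclideanSpace ℝ (Fin n) :=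
    Submodule.reflection (ℝ ∙ (x - y))ᗮ with he
  have hex : e x = y := Submodule.reflection_sub hxy
  have key : ∀ z, h₁ (e z) * h₂ (y - e z) = h₁ z * h₂ (x - z) := by
    intro z
    rw [hrep₁, hrep₁, e.norm_map, hrep₂, hrep₂, ← hex, ← e.map_sub, e.norm_map]
  calc conv h₁ h₂ x = ∫ z, h₁ z * h₂ (x - z) := rfl
    _ = ∫ z, h₁ (e z) * h₂ (y - e z) := by simp_rw [key]
    _ = ∫ z, h₁ z * h₂ (y - z) :=
        e.measurePreserving.integral_comp
          e.toHomeomorph.measurableEmbedding (fun z => h₁ z * h₂ (y - z))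
    _ = conv h₁ h₂ y := rfl

theorem stmt1 {n : ℕ} (h₁ h₂ : EuclideanSpace ℝ (Fin n) → ℝ)
    (h₁nn : ∀ x, 0 ≤ h₁ x) (h₁int : Integrable h₁)
    (h₁su : SymmUnimodal h₁)
    (h₂nn : ∀ x, 0 ≤ h₂ x) (h₂pdf : ∫ x, h₂ x = 1)
    (h₂su : SymmUnimodal h₂) :
    ∃ ψ : ℝ → ℝ, AntitoneOn ψ (Set.Ici 0) ∧
      ∀ x, conv h₁ h₂ x = ψ ‖x‖ := by
  obtain _ | m := n
  · refine ⟨fun _ => conv h₁ h₂ 0, fun a _ b _ _ => le_rfl, fun x => ?_⟩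
    have hx : x = 0 := by
      ext i
      exact i.elim0
    rw [hx]
  · obtain ⟨φ₁, hφ₁, hrep₁⟩ := h₁su.exists_antitone
    obtain ⟨φ₂, hφ₂, hrep₂⟩ := h₂su.exists_antitone
    refine ⟨fun ρ => conv h₁ h₂
      (ρ • (EuclideanSpace.single 0 1 : EuclideanSpace ℝ (Fin (m+1)))), ?_, ?_⟩
    · intro a ha b hb hab
      exact conv_mono hφ₁ hφ₂ hrep₁ hrep₂ h₁nn h₂nn h₁int ha hab
    · intro x
      refine conv_rot hrep₁ hrep₂ ?_
      rw [norm_smul, EuclideanSpace.norm_single, norm_one, mul_one, norm_norm]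
end

section
/- Let h₂ : ℝⁿ → ℝ be a non-negative integrable function that is symmetric unimodal about 0. Then for any fixed radius r > 0, the function x₁ ↦ ∫_{B((x₁,0,…,0), r)} h₂(z) dz is non-increasing in x₁ on [0, ∞), where B(c, r) is the open Euclidean ball of radius r centered at c. -/
open MeasureTheory

namespace Stmt2Aux

noncomputable def K (n : ℕ) : Submodule ℝ (EuclideanSpace ℝ (Fin (n + 1))) :=
  (ℝ ∙ (EuclideanSpace.single (0 : Fin (n + 1)) (1 : ℝ)))ᗮ

noncomputable def R (n : ℕ) :
    EuclideanSpace ℝ (Fin (n + 1)) ≃ₗᵢ[ℝ] EuclideanSpace ℝ (Fin (n + 1)) :=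
  Submodule.reflection (K n)

lemma single_eq_smul {n : ℕ} (t : ℝ) :
    EuclideanSpace.single (0 : Fin (n + 1)) t
      = t • EuclideanSpace.single (0 : Fin (n + 1)) (1 : ℝ) := by
  ext j
  by_cases h : j = 0 <;>
    simp [EuclideanSpace.single_apply, h]

lemma single_sub {n : ℕ} (t s : ℝ) :
    EuclideanSpace.single (0 : Fin (n + 1)) t - EuclideanSpace.single (0 : Fin (n + 1)) s
      = EuclideanSpace.single (0 : Fin (n + 1)) (t - s) := by
  ext j
  by_cases h : j = 0 <;>
    simp [PiLp.sub_apply, EuclideanSpace.single_apply, h]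

lemma R_single {n : ℕ} (t : ℝ) :
    R n (EuclideanSpace.single (0 : Fin (n + 1)) t)
      = -EuclideanSpace.single (0 : Fin (n + 1)) t := by
  apply Submodule.reflection_mem_subspace_orthogonal_precomplement_eq_neg
  rw [Submodule.mem_span_singleton]
  exact ⟨t, (single_eq_smul t).symm⟩

lemma R_involutive {n : ℕ} (z : EuclideanSpace ℝ (Fin (n + 1))) : R n (R n z) = z :=
  Submodule.reflection_reflection (K n) z

lemma R_apply_zero {n : ℕ} (z : EuclideanSpace ℝ (Fin (n + 1))) : R n z 0 = -(z 0) := by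
  have h := (R n).inner_map_map (EuclideanSpace.single (0 : Fin (n + 1)) (1 : ℝ)) z
  rw [R_single, inner_neg_left] at h
  have h2 : (inner ℝ (EuclideanSpace.single (0 : Fin (n + 1)) (1 : ℝ)) z : ℝ) = z 0 := by
    simp [EuclideanSpace.inner_single_left]
  have h1 : (inner ℝ (EuclideanSpace.single (0 : Fin (n + 1)) (1 : ℝ)) (R n z) : ℝ)
      = -(z 0) := by rw [← h2]; linarith [h]
  rw [EuclideanSpace.inner_single_left] at h1
  simpa using h1

lemma mem_K_iff {n : ℕ} (z : EuclideanSpace ℝ (Fin (n + 1))) : z ∈ K n ↔ z 0 = 0 := by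
  rw [K, Submodule.mem_orthogonal_singleton_iff_inner_right,
    EuclideanSpace.inner_single_left]
  simp

end Stmt2Aux

open Stmt2Aux in
theorem stmt2 {n : ℕ} (h₂ : EuclideanSpace ℝ (Fin (n + 1)) → ℝ)
    (hnn : ∀ x, 0 ≤ h₂ x) (hint : Integrable h₂)
    (hsu : SymmUnimodal h₂) (r : ℝ) (hr : 0 < r) :
    AntitoneOn
      (fun x₁ : ℝ =>
        ∫ z in Metric.ball (EuclideanSpace.single (0 : Fin (n + 1)) x₁) r, h₂ z)
      (Set.Ici 0) := by
  obtain ⟨φ, hφ, hφeq⟩ := hsu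
  intro a ha b hb hab
  simp only [Set.mem_Ici] at ha hb
  set c : ℝ := a + b with hc
  set m : ℝ := (a + b) / 2 with hm
  have h2m : c = 2 * m := by rw [hc, hm]; ring
  have hc0 : 0 ≤ c := by rw [hc]; linarith
  set v : ℝ → EuclideanSpace ℝ (Fin (n + 1)) :=
    fun t => EuclideanSpace.single (0 : Fin (n + 1)) t with hv
  set T : EuclideanSpace ℝ (Fin (n + 1)) → EuclideanSpace ℝ (Fin (n + 1)) :=
    fun z => v c + R n z with hT
  -- basic facts about v
  have hvsub : ∀ t s : ℝ, v t - v s = v (t - s) := fun t s => single_sub t s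
  have hv0 : ∀ t : ℝ, v t 0 = t := by
    intro t; simp [hv, EuclideanSpace.single_apply]
  have hRv : ∀ t : ℝ, R n (v t) = -v t := fun t => R_single t
  -- basic facts about T
  have hTdist : ∀ (z : EuclideanSpace ℝ (Fin (n + 1))) (t : ℝ),
      dist (T z) (v t) = dist z (v (c - t)) := by
    intro z t
    have key : T z - v t = R n (z - v (c - t)) := by
      rw [map_sub, hRv, sub_neg_eq_add, ← hvsub]
      show v c + R n z - v t = R n z + (v c - v t)
      abel
    rw [dist_eq_norm, dist_eq_norm, key, (R n).norm_map]
  have hT0 : ∀ z : EuclideanSpace ℝ (Fin (n + 1)), T z 0 = c - z 0 := by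
    intro z
    have h1 : T z 0 = v c 0 + R n z 0 := rfl
    rw [h1, hv0, R_apply_zero]; ring
  have hTT : ∀ z : EuclideanSpace ℝ (Fin (n + 1)), T (T z) = z := by
    intro z
    show v c + R n (v c + R n z) = z
    rw [map_add, R_involutive, hRv]
    abel
  have himg : ∀ s : Set (EuclideanSpace ℝ (Fin (n + 1))), T '' s = {w | T w ∈ s} := by
    intro s
    ext w
    constructor
    · rintro ⟨z, hz, rfl⟩; simpa [hTT z] using hz
    · intro hw; exact ⟨T w, hw, hTT w⟩
  -- norm inequality
  have hnorm : ∀ z : EuclideanSpace ℝ (Fin (n + 1)), z 0 ≤ m → ‖z‖ ≤ ‖T z‖ := by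
    intro z hz
    have hsq : ‖T z‖ ^ 2 = ‖z‖ ^ 2 + c * (c - 2 * z 0) := by
      have h1 : ‖T z‖ ^ 2 = ‖v c‖ ^ 2 + 2 * (inner ℝ (v c) (R n z) : ℝ) + ‖R n z‖ ^ 2 :=
        norm_add_sq_real (v c) (R n z)
      have h2 : (inner ℝ (v c) (R n z) : ℝ) = -(c * z 0) := by
        show (inner ℝ (EuclideanSpace.single (0 : Fin (n + 1)) c) (R n z) : ℝ) = -(c * z 0)
        rw [EuclideanSpace.inner_single_left, R_apply_zero]
        simp
      have h3 : ‖v c‖ = |c| := by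
        rw [show ‖v c‖ = ‖EuclideanSpace.single (0 : Fin (n + 1)) c‖ from rfl,
          EuclideanSpace.norm_single]; rfl
      have h4 : ‖R n z‖ = ‖z‖ := (R n).norm_map z
      rw [h1, h2, h3, h4, sq_abs]; ring
    have hfac : 0 ≤ c * (c - 2 * z 0) := by
      apply mul_nonneg hc0; rw [h2m]; linarith
    nlinarith [norm_nonneg z, norm_nonneg (T z)]
  have hpt : ∀ z : EuclideanSpace ℝ (Fin (n + 1)), z 0 ≤ m → h₂ (T z) ≤ h₂ z := by
    intro z hz
    rw [hφeq, hφeq]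
    exact hφ (norm_nonneg z) (Set.mem_Ici.mpr ((norm_nonneg z).trans (hnorm z hz)))
      (hnorm z hz)
  -- distance monotonicity
  have hdistsq : ∀ (z : EuclideanSpace ℝ (Fin (n + 1))) (t : ℝ),
      dist z (v t) ^ 2 = ‖z‖ ^ 2 - 2 * (t * z 0) + t ^ 2 := by
    intro z t
    rw [dist_eq_norm, norm_sub_sq_real]
    have h2 : (inner ℝ z (v t) : ℝ) = t * z 0 := by
      show (inner ℝ z (EuclideanSpace.single (0 : Fin (n + 1)) t) : ℝ) = t * z 0
      rw [EuclideanSpace.inner_single_right]; simp [mul_comm]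
    have h3 : ‖v t‖ = |t| := by
      rw [show ‖v t‖ = ‖EuclideanSpace.single (0 : Fin (n + 1)) t‖ from rfl,
        EuclideanSpace.norm_single]; rfl
    rw [h2, h3, sq_abs]
  have hdistmono : ∀ z : EuclideanSpace ℝ (Fin (n + 1)),
      z 0 ≤ m → dist z (v a) ≤ dist z (v b) := by
    intro z hz
    have h1 := hdistsq z a
    have h2 := hdistsq z b
    have hm2 : a + b = 2 * m := by rw [hm]; ring
    nlinarith [dist_nonneg (x := z) (y := v a), dist_nonneg (x := z) (y := v b)]
  -- measure-theoretic facts about T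
  have hTmp : MeasurePreserving T volume volume :=
    (measurePreserving_add_left volume (v c)).comp (R n).measurePreserving
  have hTemb : MeasurableEmbedding T := by
    have heq : T = ⇑(((R n).toHomeomorph.toMeasurableEquiv).trans
        (Homeomorph.toMeasurableEquiv (Homeomorph.addLeft (v c)))) := by
      funext z; rfl
    rw [heq]
    exact MeasurableEquiv.measurableEmbedding _
  have hmeas0 : Measurable fun z : EuclideanSpace ℝ (Fin (n + 1)) => z 0 :=
    (measurable_pi_apply 0).comp (WithLp.measurable_ofLp 2 _)
  set S : Set (EuclideanSpace ℝ (Fin (n + 1))) := {z | z 0 < m} with hS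
  set S' : Set (EuclideanSpace ℝ (Fin (n + 1))) := {z | z 0 ≤ m} with hS'
  have hSmeas : MeasurableSet S := measurableSet_lt hmeas0 measurable_const
  have hS'meas : MeasurableSet S' := measurableSet_le hmeas0 measurable_const
  set A : Set (EuclideanSpace ℝ (Fin (n + 1))) := Metric.ball (v a) r with hA
  set B : Set (EuclideanSpace ℝ (Fin (n + 1))) := Metric.ball (v b) r with hB
  have hAmeas : MeasurableSet A := by rw [hA]; exact Metric.isOpen_ball.measurableSet
  have hca : c - a = b := by rw [hc]; ring
  have hcb : c - b = a := by rw [hc]; ring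
  -- image identities
  have himg1 : T '' (A ∩ S) = B \ S' := by
    rw [himg]
    ext w
    simp only [Set.mem_setOf_eq, Set.mem_inter_iff, Set.mem_diff, hA, hB, hS, hS',
      Metric.mem_ball, not_le]
    rw [hTdist, hT0, hca]
    constructor
    · rintro ⟨h1, h2⟩; exact ⟨h1, by linarith [h2m ▸ h2]⟩
    · rintro ⟨h1, h2⟩; exact ⟨h1, by rw [h2m] at *; linarith⟩
  have himg2 : T '' (B ∩ S') = A \ S := by
    rw [himg]
    ext w
    simp only [Set.mem_setOf_eq, Set.mem_inter_iff, Set.mem_diff, hA, hB, hS, hS',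
      Metric.mem_ball, not_lt]
    rw [hTdist, hT0, hcb]
    constructor
    · rintro ⟨h1, h2⟩; exact ⟨h1, by rw [h2m] at *; linarith⟩
    · rintro ⟨h1, h2⟩; exact ⟨h1, by rw [h2m] at *; linarith⟩
  -- integrability
  have hintT : Integrable (fun z => h₂ (T z)) :=
    (hTmp.integrable_comp hint.1).2 hint
  -- the main decomposition
  have hsplitB : ∫ z in B, h₂ z = (∫ z in B ∩ S', h₂ z) + ∫ z in A ∩ S, h₂ (T z) := by
    rw [← integral_inter_add_diff (f := h₂) (s := B) (t := S') hS'meas hint.integrableOn]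
    congr 1
    rw [← himg1]
    exact hTmp.setIntegral_image_emb hTemb h₂ _
  have hsplitA : ∫ z in A, h₂ z = (∫ z in A ∩ S, h₂ z) + ∫ z in B ∩ S', h₂ (T z) := by
    rw [← integral_inter_add_diff (f := h₂) (s := A) (t := S) hSmeas hint.integrableOn]
    congr 1
    rw [← himg2]
    exact hTmp.setIntegral_image_emb hTemb h₂ _
  -- null hyperplane
  have hHnull : volume {z : EuclideanSpace ℝ (Fin (n + 1)) | z 0 = m} = 0 := by
    have hpre : {z : EuclideanSpace ℝ (Fin (n + 1)) | z 0 = m}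
        = (fun x => v (-m) + x) ⁻¹' (K n : Set (EuclideanSpace ℝ (Fin (n + 1)))) := by
      ext z
      simp only [Set.mem_setOf_eq, Set.mem_preimage, SetLike.mem_coe, mem_K_iff]
      have h1 : (v (-m) + z) 0 = -m + z 0 := rfl
      rw [h1]
      constructor <;> intro h <;> linarith
    rw [hpre, measure_preimage_add]
    apply Measure.addHaar_submodule
    intro htop
    have h1 : EuclideanSpace.single (0 : Fin (n + 1)) (1 : ℝ) ∈ K n := htop ▸ trivial
    rw [mem_K_iff] at h1
    simp [EuclideanSpace.single_apply] at h1
  -- comparison of the two remaining integrals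
  have hsub : (B ∩ S') \ (A ∩ S) ⊆ {z : EuclideanSpace ℝ (Fin (n + 1)) | z 0 = m} := by
    intro z hz
    obtain ⟨⟨hzB, hzS'⟩, hznot⟩ := hz
    have hzS'' : z 0 ≤ m := hzS'
    by_contra hne
    have hlt : z 0 < m := lt_of_le_of_ne hzS'' hne
    have hzA : z ∈ A := by
      rw [hA, Metric.mem_ball]
      calc dist z (v a) ≤ dist z (v b) := hdistmono z hzS''
        _ < r := by rwa [hB, Metric.mem_ball] at hzB
    exact hznot ⟨hzA, hlt⟩
  have hle : (∫ z in B ∩ S', (h₂ z - h₂ (T z)))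
      ≤ ∫ z in A ∩ S, (h₂ z - h₂ (T z)) := by
    apply setIntegral_mono_set
    · exact hint.integrableOn.sub hintT.integrableOn
    · rw [Filter.EventuallyLE, ae_restrict_iff' (hAmeas.inter hSmeas)]
      apply ae_of_all
      intro z hz
      have hzS : z 0 < m := hz.2
      simp only [Pi.zero_apply]
      have := hpt z hzS.le
      linarith
    · rw [MeasureTheory.ae_le_set]
      exact measure_mono_null hsub hHnull
  rw [integral_sub hint.integrableOn hintT.integrableOn,
    integral_sub hint.integrableOn hintT.integrableOn] at hle
  show ∫ z in B, h₂ z ≤ ∫ z in A, h₂ z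
  rw [hsplitA, hsplitB]
  linarith
end

section
/- Let Z be a real-valued random variable whose distribution is symmetric (P(Z ∈ A) = P(−Z ∈ A)) and unimodal in the sense that P(Z = k) is non-increasing in |k| for integer-valued Z. Let ξ be a probability mass function on ℤ that is almost symmetric and unimodal (a.s.u.) about a point a ∈ ℤ. Then the convolution (ξ * μ)(x) = Σ_{x'} ξ(x') μ(x − x'), where μ is the (even, a.s.u.) pmf of Z, is a.s.u. about a. -/
open scoped BigOperators
open Finset

/-- Spiral enumeration of ℤ: sp 1 = 0, sp 2 = 1, sp 3 = -1, sp 4 = 2, sp 5 = -2, … -/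
def sp (k : ℕ) : ℤ := if k % 2 = 0 then ((k / 2 : ℕ) : ℤ) else -((k / 2 : ℕ) : ℤ)

/-- `f` is almost symmetric and unimodal (a.s.u.) about `a`: its values, read in the
spiral order `f a, f (a+1), f (a-1), f (a+2), f (a-2), …` (or the mirrored order),
form a non-increasing sequence. -/
def ASU (f : ℤ → ℝ) (a : ℤ) : Prop :=
  Antitone (fun n : ℕ => f (a + sp (n + 1))) ∨
  Antitone (fun n : ℕ => f (a - sp (n + 1)))

/-- `Maj f g` (`f ≺ g`): for every m, the sum of any m values of f is at most the
sum of some m values of g, i.e. every partial sum of the m largest values of f is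
at most that of g. -/
def Maj (f g : ℤ → ℝ) : Prop :=
  ∀ A : Finset ℤ, ∃ B : Finset ℤ, B.card = A.card ∧ ∑ x ∈ A, f x ≤ ∑ x ∈ B, g x

/-- A probability mass function on ℤ. -/
def IsPmf (f : ℤ → ℝ) : Prop := (∀ x, 0 ≤ f x) ∧ HasSum f 1


section Aux

lemma sp_even (p : ℕ) : sp (2 * p) = (p : ℤ) := by
  simp [sp, Nat.mul_mod_right, Nat.mul_div_cancel_left]

lemma sp_odd (p : ℕ) : sp (2 * p + 1) = -(p : ℤ) := by
  have h1 : (2 * p + 1) % 2 = 1 := by omega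
  have h2 : (2 * p + 1) / 2 = p := by omega
  simp [sp, h1, h2]

def spEquiv : ℕ ≃ ℤ where
  toFun n := sp (n + 1)
  invFun z := if 0 < z then 2 * z.toNat - 1 else 2 * (-z).toNat
  left_inv n := by
    show (if 0 < sp (n+1) then 2 * (sp (n+1)).toNat - 1 else 2 * (-(sp (n+1))).toNat) = n
    rcases Nat.even_or_odd n with ⟨p, hp⟩ | ⟨p, hp⟩
    · have h : n + 1 = 2 * p + 1 := by omega
      rw [h, sp_odd]
      split_ifs with h1 <;> omega
    · have h : n + 1 = 2 * (p + 1) := by omega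
      rw [h, sp_even]
      split_ifs with h1 <;> omega
  right_inv z := by
    show sp ((if 0 < z then 2 * z.toNat - 1 else 2 * (-z).toNat) + 1) = z
    rcases lt_or_ge 0 z with hz | hz
    · rw [if_pos hz]
      have h : 2 * z.toNat - 1 + 1 = 2 * z.toNat := by omega
      rw [h, sp_even]; omega
    · rw [if_neg (by omega)]
      rw [sp_odd]; omega

lemma spEquiv_apply (n : ℕ) : spEquiv n = sp (n + 1) := rfl

lemma sum_Icc_shift (f : ℤ → ℝ) (c A B : ℤ) :
    ∑ i ∈ Icc A B, f (c - i) = ∑ i ∈ Icc (c - B) (c - A), f i := by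
  refine Finset.sum_nbij' (fun i => c - i) (fun i => c - i)
    (fun i hi => ?_) (fun i hi => ?_) (fun i hi => by show c - (c - i) = i; omega)
    (fun i hi => by show c - (c - i) = i; omega)
    (fun i hi => rfl)
  · simp only [mem_Icc] at *; omega
  · simp only [mem_Icc] at *; omega

lemma sum_Icc_neg (μ : ℤ → ℝ) (heven : ∀ k, μ k = μ (-k)) (A B : ℤ) :
    ∑ i ∈ Icc A B, μ i = ∑ i ∈ Icc (-B) (-A), μ i := by
  refine Finset.sum_nbij' (fun i => -i) (fun i => -i)
    (fun i hi => ?_) (fun i hi => ?_) (fun i hi => by show -(-i) = i; omega)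
    (fun i hi => by show -(-i) = i; omega)
    (fun i hi => heven i)
  · simp only [mem_Icc] at *; omega
  · simp only [mem_Icc] at *; omega

lemma sum_Icc_top (f : ℤ → ℝ) (A B B' : ℤ) (hB : B' = B + 1) (h : A ≤ B + 1) :
    ∑ i ∈ Icc A B', f i = (∑ i ∈ Icc A B, f i) + f B' := by
  subst hB
  have he : Icc A (B+1) = insert (B+1) (Icc A B) := by
    ext x; simp only [mem_Icc, mem_insert]; omega
  rw [he, Finset.sum_insert (by simp only [mem_Icc]; omega)]; ring

lemma sum_Icc_bot (f : ℤ → ℝ) (A A' B : ℤ) (hA : A' = A - 1) (h : A - 1 ≤ B) :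
    ∑ i ∈ Icc A' B, f i = f A' + ∑ i ∈ Icc A B, f i := by
  subst hA
  have he : Icc (A-1) B = insert (A-1) (Icc A B) := by
    ext x; simp only [mem_Icc, mem_insert]; omega
  rw [he, Finset.sum_insert (by simp only [mem_Icc]; omega)]


lemma spiral_sum (f : ℤ → ℝ) (j : ℕ) :
    (∑ n ∈ range (2*j+1), f (sp (n+1)) = ∑ i ∈ Icc (-(j:ℤ)) (j:ℤ), f i) ∧
    (∑ n ∈ range (2*j+2), f (sp (n+1)) = ∑ i ∈ Icc (-(j:ℤ)) ((j:ℤ)+1), f i) := by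
  induction j with
  | zero =>
    have hs1 : sp 1 = 0 := by decide
    have hs2 : sp 2 = 1 := by decide
    constructor
    · show ∑ n ∈ range 1, f (sp (n+1)) = _
      rw [Finset.sum_range_one, hs1]
      norm_num
    · show ∑ n ∈ range 2, f (sp (n+1)) = _
      rw [Finset.sum_range_succ, Finset.sum_range_one, hs1, hs2,
        sum_Icc_top f _ 0 _ (by norm_num) (by norm_num)]
      norm_num
  | succ j ih =>
    obtain ⟨ih1, ih2⟩ := ih
    have hsp1 : sp (2*j+2+1) = -((j:ℤ)+1) := by
      rw [show 2*j+2+1 = 2*(j+1)+1 by ring, sp_odd]; push_cast; ring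
    have hsp2 : sp (2*j+3+1) = (j:ℤ)+2 := by
      rw [show 2*j+3+1 = 2*(j+2) by ring, sp_even]; push_cast; ring
    constructor
    · rw [show 2*(j+1)+1 = (2*j+2)+1 by ring, Finset.sum_range_succ, ih2, hsp1]
      push_cast
      rw [sum_Icc_bot f (-(j:ℤ)) (-((j:ℤ)+1)) ((j:ℤ)+1) (by ring) (by omega)]
      ring
    · rw [show 2*(j+1)+2 = ((2*j+2)+1)+1 by ring, Finset.sum_range_succ,
        Finset.sum_range_succ, ih2, hsp1, hsp2]
      push_cast
      rw [sum_Icc_top f (-((j:ℤ)+1)) ((j:ℤ)+1) ((j:ℤ)+1+1) (by ring) (by omega),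
        sum_Icc_bot f (-(j:ℤ)) (-((j:ℤ)+1)) ((j:ℤ)+1) (by ring) (by omega)]
      ring

-- sum over Icc is monotone under unit right-shift when μ is unimodal-compatible
lemma shift_le (μ : ℤ → ℝ) (A B A' B' : ℤ) (hA : A' = A + 1) (hB : B' = B + 1)
    (hend : μ B' ≤ μ A) :
    ∑ i ∈ Icc A' B', μ i ≤ ∑ i ∈ Icc A B, μ i := by
  rcases le_or_gt A B with h | h
  · rw [sum_Icc_top μ A' B B' hB (by omega),
        sum_Icc_bot μ A' A B (by omega) (by omega)]
    linarith
  · rw [Finset.Icc_eq_empty (by omega), Finset.Icc_eq_empty (by omega)]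

lemma sum_Icc_congr (μ : ℤ → ℝ) (A B A' B' : ℤ) (hA : A = A') (hB : B = B') :
    ∑ i ∈ Icc A B, μ i = ∑ i ∈ Icc A' B', μ i := by rw [hA, hB]

lemma window (μ : ℤ → ℝ) (heven : ∀ k, μ k = μ (-k))
    (hmono : ∀ u v : ℤ, -v ≤ u → u ≤ v → μ v ≤ μ u) (m N : ℕ) :
    ∑ n ∈ range N, μ (sp (m+2) - sp (n+1)) ≤ ∑ n ∈ range N, μ (sp (m+1) - sp (n+1)) := by
  rcases Nat.eq_zero_or_pos N with hN | hN
  · subst hN; simp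
  -- express both sides as Icc sums
  obtain ⟨j, hj⟩ : ∃ j, N = 2*j+1 ∨ N = 2*j+2 := by
    rcases Nat.even_or_odd N with ⟨j, h⟩ | ⟨j, h⟩
    · exact ⟨j-1, by omega⟩
    · exact ⟨j, by omega⟩
  have key : ∀ s : ℤ, ∑ n ∈ range N, μ (s - sp (n+1)) =
      ∑ i ∈ Icc (s - (if N = 2*j+1 then (j:ℤ) else (j:ℤ)+1)) (s + (j:ℤ)), μ i := by
    intro s
    rcases hj with h | h
    · rw [h, (spiral_sum (fun t => μ (s - t)) j).1, sum_Icc_shift μ s, if_pos (by omega)]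
      exact sum_Icc_congr μ _ _ _ _ rfl (by ring)
    · rw [h, (spiral_sum (fun t => μ (s - t)) j).2, sum_Icc_shift μ s,
        if_neg (by omega)]
      exact sum_Icc_congr μ _ _ _ _ rfl (by ring)
  rw [key, key]
  set H : ℤ := (if N = 2*j+1 then (j:ℤ) else (j:ℤ)+1) with hH
  have hHj : H = j ∨ H = (j:ℤ)+1 := by
    rcases hj with h | h
    · left; rw [hH, if_pos (by omega)]
    · right; rw [hH, if_neg (by omega)]
  -- case on parity of m
  rcases Nat.even_or_odd m with ⟨q, hq⟩ | ⟨q, hq⟩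
  · -- m = 2q : s1 = sp(2q+1) = -q, s2 = sp(2q+2) = q+1
    have hs1 : sp (m+1) = -(q:ℤ) := by rw [show m+1 = 2*q+1 by omega, sp_odd]
    have hs2 : sp (m+2) = (q:ℤ)+1 := by
      rw [show m+2 = 2*(q+1) by omega, sp_even]; push_cast; ring
    rw [hs1, hs2]
    -- LHS over Icc (q+1-H, q+1+j) ; RHS flipped: Icc (-q-j .. -q+H) → Icc (q-H, q+j)
    rw [sum_Icc_neg μ heven (-(q:ℤ) - H) (-(q:ℤ) + (j:ℤ))]
    rcases hHj with h | h
    · -- H = j : shift case, A = q - j, B = q + j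
      rw [h]
      calc ∑ i ∈ Icc ((q:ℤ)+1-(j:ℤ)) ((q:ℤ)+1+(j:ℤ)), μ i
          ≤ ∑ i ∈ Icc ((q:ℤ)-(j:ℤ)) ((q:ℤ)+(j:ℤ)), μ i := by
            apply shift_le μ _ _ _ _ (by ring) (by ring)
            exact hmono _ _ (by omega) (by omega)
        _ = _ := sum_Icc_congr μ _ _ _ _ (by ring) (by ring)
    · -- H = j+1 : equal intervals
      rw [h]
      exact le_of_eq (sum_Icc_congr μ _ _ _ _ (by ring) (by ring))
  · -- m = 2q+1 : s1 = sp(2q+2) = q+1, s2 = sp(2q+3) = -(q+1)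
    have hs1 : sp (m+1) = (q:ℤ)+1 := by
      rw [show m+1 = 2*(q+1) by omega, sp_even]; push_cast; ring
    have hs2 : sp (m+2) = -((q:ℤ)+1) := by
      rw [show m+2 = 2*(q+1)+1 by omega, sp_odd]; push_cast; ring
    rw [hs1, hs2]
    rw [sum_Icc_neg μ heven (-((q:ℤ)+1) - H) (-((q:ℤ)+1) + (j:ℤ))]
    rcases hHj with h | h
    · -- H = j : equal intervals
      rw [h]
      exact le_of_eq (sum_Icc_congr μ _ _ _ _ (by ring) (by ring))
    · -- H = j+1 : shift case: LHS = Icc (q+1-j, q+j+2), RHS = Icc (q-j, q+j+1)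
      rw [h]
      calc ∑ i ∈ Icc (-(-((q:ℤ)+1) + (j:ℤ))) (-(-((q:ℤ)+1) - ((j:ℤ)+1))), μ i
          ≤ ∑ i ∈ Icc ((q:ℤ)-(j:ℤ)) ((q:ℤ)+(j:ℤ)+1), μ i := by
            apply shift_le μ _ _ _ _ (by ring) (by ring)
            exact hmono _ _ (by omega) (by omega)
        _ = _ := sum_Icc_congr μ _ _ _ _ (by ring) (by ring)

lemma abel_aux (c d : ℕ → ℝ) (hc : Antitone c) (hc0 : ∀ n, 0 ≤ c n)
    (hT : ∀ N, 0 ≤ ∑ n ∈ range N, d n) (N : ℕ) :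
    c N * (∑ n ∈ range N, d n) ≤ ∑ n ∈ range N, c n * d n := by
  induction N with
  | zero => simp
  | succ N ih =>
    rw [Finset.sum_range_succ, Finset.sum_range_succ]
    have h1 : c (N+1) * (∑ n ∈ range N, d n + d N) ≤ c N * (∑ n ∈ range N, d n + d N) := by
      apply mul_le_mul_of_nonneg_right (hc (Nat.le_succ N))
      have := hT (N+1); rwa [Finset.sum_range_succ] at this
    nlinarith [ih]
  
lemma core (μ : ℤ → ℝ) (hμ0 : ∀ x, 0 ≤ μ x) (hμ1 : ∀ x, μ x ≤ 1)
    (heven : ∀ k, μ k = μ (-k)) (hmono : ∀ u v : ℤ, -v ≤ u → u ≤ v → μ v ≤ μ u)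
    (c : ℕ → ℝ) (hc : Antitone c) (hc0 : ∀ n, 0 ≤ c n) (hcs : Summable c) (m : ℕ) :
    ∑' n, c n * μ (sp (m+2) - sp (n+1)) ≤ ∑' n, c n * μ (sp (m+1) - sp (n+1)) := by
  have hsum : ∀ s : ℤ, Summable (fun n => c n * μ (s - sp (n+1))) := fun s =>
    Summable.of_nonneg_of_le (fun n => mul_nonneg (hc0 n) (hμ0 _))
      (fun n => mul_le_of_le_one_right (hc0 n) (hμ1 _)) hcs
  refine le_of_tendsto_of_tendsto' ((hsum _).hasSum.tendsto_sum_nat)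
    ((hsum _).hasSum.tendsto_sum_nat) (fun N => ?_)
  have hT : ∀ M, 0 ≤ ∑ n ∈ range M,
      (μ (sp (m+1) - sp (n+1)) - μ (sp (m+2) - sp (n+1))) := by
    intro M
    rw [Finset.sum_sub_distrib, sub_nonneg]
    exact window μ heven hmono m M
  have habel := abel_aux c _ hc hc0 hT N
  have h0 : 0 ≤ c N * (∑ n ∈ range N,
      (μ (sp (m+1) - sp (n+1)) - μ (sp (m+2) - sp (n+1)))) :=
    mul_nonneg (hc0 N) (hT N)
  have hsplit : ∑ n ∈ range N, c n * (μ (sp (m+1) - sp (n+1)) - μ (sp (m+2) - sp (n+1)))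
      = ∑ n ∈ range N, c n * μ (sp (m+1) - sp (n+1))
        - ∑ n ∈ range N, c n * μ (sp (m+2) - sp (n+1)) := by
    rw [← Finset.sum_sub_distrib]
    exact Finset.sum_congr rfl (fun n _ => by ring)
  linarith [habel, h0, hsplit.symm ▸ habel]

end Aux

theorem stmt3 (μ ξ : ℤ → ℝ) (a : ℤ)
    (hμ : IsPmf μ) (hμeven : ∀ k, μ k = μ (-k)) (hμasu : ASU μ 0)
    (hξ : IsPmf ξ) (hξasu : ASU ξ a) :
    ASU (fun x => ∑' x' : ℤ, ξ x' * μ (x - x')) a := by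
  obtain ⟨hξ0, hξsum⟩ := hξ
  obtain ⟨hμ0, hμsum⟩ := hμ
  have hμ1 : ∀ x, μ x ≤ 1 := fun x => le_hasSum hμsum x (fun _ _ => hμ0 _)
  -- μ is antitone along the spiral
  have hμanti : Antitone (fun n : ℕ => μ (sp (n+1))) := by
    rcases hμasu with h | h
    · intro x y hxy; simpa using h hxy
    · intro x y hxy
      have := h hxy
      simp only [zero_sub] at this
      rwa [← hμeven, ← hμeven] at this
  -- monotone in ℕ
  have hnat : ∀ p q : ℕ, p ≤ q → μ (q:ℤ) ≤ μ (p:ℤ) := by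
    intro p q hpq
    have hidx : ∀ r : ℕ, μ (sp (2*r - 1 + 1)) = μ (r:ℤ) := by
      intro r
      rcases Nat.eq_zero_or_pos r with h | h
      · subst h; norm_num [show sp 1 = 0 from by decide]
      · rw [show 2*r - 1 + 1 = 2*r by omega, sp_even]
    have := hμanti (show 2*p - 1 ≤ 2*q - 1 by omega)
    simp only [] at this
    rwa [hidx p, hidx q] at this
  have hmono : ∀ u v : ℤ, -v ≤ u → u ≤ v → μ v ≤ μ u := by
    intro u v h1 h2
    have hu : μ u = μ (u.natAbs : ℤ) := by
      rcases le_or_gt 0 u with h | h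
      · rw [Int.natAbs_of_nonneg h]
      · rw [hμeven, show ((u.natAbs : ℤ)) = -u by omega]
    have hv : μ v = μ (v.natAbs : ℤ) := by
      rw [Int.natAbs_of_nonneg (by omega)]
    rw [hu, hv]
    exact hnat _ _ (by omega)
  have hcs0 : Summable ξ := hξsum.summable
  rcases hξasu with h | h
  · left
    apply antitone_nat_of_succ_le
    intro m
    show ∑' x', ξ x' * μ ((a + sp (m+1+1)) - x') ≤ ∑' x', ξ x' * μ ((a + sp (m+1)) - x')
    set e : ℕ ≃ ℤ := spEquiv.trans (Equiv.addLeft a) with he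
    have hen : ∀ n, e n = a + sp (n+1) := fun n => by
      simp [he, Equiv.trans_apply, spEquiv_apply, Equiv.coe_addLeft]
    have hes : Summable (fun n => ξ (a + sp (n+1))) :=
      ((e.summable_iff (f := ξ)).mpr hcs0).congr (fun n => by rw [Function.comp_apply, hen])
    have hkey : ∀ M : ℕ, ∑' x', ξ x' * μ ((a + sp M) - x')
        = ∑' n, ξ (a + sp (n+1)) * μ (sp M - sp (n+1)) := by
      intro M
      rw [← e.tsum_eq (fun x' => ξ x' * μ ((a + sp M) - x'))]
      refine tsum_congr fun n => ?_
      rw [hen]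
      congr 1
      ring
    rw [hkey, hkey, show m+1+1 = m+2 from rfl]
    exact core μ hμ0 hμ1 hμeven hmono _ h (fun n => hξ0 _)
      hes m
  · right
    apply antitone_nat_of_succ_le
    intro m
    show ∑' x', ξ x' * μ ((a - sp (m+1+1)) - x') ≤ ∑' x', ξ x' * μ ((a - sp (m+1)) - x')
    set e : ℕ ≃ ℤ := spEquiv.trans ((Equiv.neg ℤ).trans (Equiv.addLeft a)) with he
    have hen : ∀ n, e n = a - sp (n+1) := fun n => by
      simp [he, Equiv.trans_apply, spEquiv_apply, Equiv.coe_addLeft, sub_eq_add_neg]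
    have hes : Summable (fun n => ξ (a - sp (n+1))) :=
      ((e.summable_iff (f := ξ)).mpr hcs0).congr (fun n => by rw [Function.comp_apply, hen])
    have hkey : ∀ M : ℕ, ∑' x', ξ x' * μ ((a - sp M) - x')
        = ∑' n, ξ (a - sp (n+1)) * μ (sp M - sp (n+1)) := by
      intro M
      rw [← e.tsum_eq (fun x' => ξ x' * μ ((a - sp M) - x'))]
      refine tsum_congr fun n => ?_
      rw [hen]
      congr 1
      rw [hμeven]
      congr 1
      ring
    rw [hkey, hkey, show m+1+1 = m+2 from rfl]
    exact core μ hμ0 hμ1 hμeven hmono _ h (fun n => hξ0 _)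
      hes m
end

section
/- Let ρ : ℤ × X → [0,∞) for a finite set X ⊆ ℤ, with ρ(x,a) = g(|x−a|) for some non-decreasing g with g(0) = 0. Let θ be a pmf on ℤ that is a.s.u. about some point b ∈ X. Then the minimum over a ∈ X of Σ_x ρ(x,a) θ(x) is attained at a = b, and equals the inner product of the non-decreasing rearrangement of the distortion values with the non-increasing rearrangement of θ. -/
open scoped BigOperators

/- ---------------- Auxiliary development ---------------- -/

open scoped ENNReal
open Finset

/-- Inverse of the spiral enumeration. -/
def spi (z : ℤ) : ℕ := if 0 < z then (2*z - 1).toNat else (-(2*z)).toNat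

/-- The spiral enumeration as an equivalence `ℕ ≃ ℤ`. -/
def spE : ℕ ≃ ℤ where
  toFun n := sp (n + 1)
  invFun z := spi z
  left_inv n := by
    simp only [sp, spi]
    split_ifs <;> omega
  right_inv z := by
    simp only [sp, spi]
    split_ifs <;> push_cast <;> omega

lemma natAbs_spE (n : ℕ) : (spE n).natAbs = (n+1)/2 := by
  show (sp (n+1)).natAbs = _
  simp only [sp]; split_ifs <;> omega

noncomputable def tailSum (P : ℕ → ℝ≥0∞) (k : ℕ) : ℝ≥0∞ := ∑' n, if k ≤ n then P n else 0

lemma head_tail (P : ℕ → ℝ≥0∞) (k : ℕ) :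
    ∑' n, P n = (∑ n ∈ range k, P n) + tailSum P k := by
  have h1 : ∑' n, (if n < k then P n else 0) = ∑ n ∈ range k, P n := by
    rw [tsum_eq_sum (s := range k) (fun b hb => by simp [mem_range] at hb ⊢; omega)]
    exact Finset.sum_congr rfl fun x hx => by simp [mem_range.mp hx]
  rw [← h1, tailSum, ← ENNReal.tsum_add]
  exact tsum_congr fun n => by by_cases h : n < k <;> simp [h, Nat.le_of_not_lt, Nat.not_le.mpr]

lemma teleC (C : ℕ → ℝ≥0∞) (hC : Monotone C) (hC0 : C 0 = 0) (n : ℕ) :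
    ∑ k ∈ range n, (C (k+1) - C k) = C n := by
  induction n with
  | zero => simp [hC0]
  | succ n ih => rw [Finset.sum_range_succ, ih, add_tsub_cancel_of_le (hC (Nat.le_succ n))]

lemma expand_sum (C : ℕ → ℝ≥0∞) (hC : Monotone C) (hC0 : C 0 = 0) (P : ℕ → ℝ≥0∞) :
    ∑' n, C n * P n = ∑' k, (C (k+1) - C k) * tailSum P (k+1) := by
  have step1 : ∑' n, C n * P n = ∑' n, ∑' k, (if k < n then (C (k+1) - C k) * P n else 0) := by
    refine tsum_congr fun n => ?_
    rw [tsum_eq_sum (s := range n) (fun b hb => by simp [mem_range] at hb ⊢; omega)]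
    rw [← teleC C hC hC0 n, Finset.sum_mul]
    exact Finset.sum_congr rfl fun x hx => by simp [mem_range.mp hx]
  rw [step1, ENNReal.tsum_comm]
  refine tsum_congr fun k => ?_
  rw [tailSum, ← ENNReal.tsum_mul_left]
  refine tsum_congr fun n => ?_
  by_cases h : k < n
  · simp [h, Nat.succ_le_of_lt h]
  · rw [if_neg h, if_neg (fun hh => h (Nat.lt_of_succ_le hh)), mul_zero]

lemma ennreal_rearrange (C : ℕ → ℝ≥0∞) (hC : Monotone C) (hC0 : C 0 = 0)
    (P Q : ℕ → ℝ≥0∞) (htot : ∑' n, P n = ∑' n, Q n) (hfin : ∑' n, Q n ≠ ⊤)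
    (hhead : ∀ k, ∑ n ∈ range k, Q n ≤ ∑ n ∈ range k, P n) :
    ∑' n, C n * P n ≤ ∑' n, C n * Q n := by
  rw [expand_sum C hC hC0 P, expand_sum C hC hC0 Q]
  refine ENNReal.tsum_le_tsum fun k => mul_le_mul_right ?_ _
  have hP := head_tail P (k+1)
  have hQ := head_tail Q (k+1)
  have hQfin : ∑ n ∈ range (k+1), Q n ≠ ⊤ := by
    intro h
    rw [hQ, h] at hfin; simp at hfin
  have : (∑ n ∈ range (k+1), Q n) + tailSum P (k+1)
      ≤ (∑ n ∈ range (k+1), Q n) + tailSum Q (k+1) := by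
    calc (∑ n ∈ range (k+1), Q n) + tailSum P (k+1)
        ≤ (∑ n ∈ range (k+1), P n) + tailSum P (k+1) := add_le_add_left (hhead _) _
      _ = ∑' n, Q n := by rw [← hP, htot]
      _ = _ := hQ
  exact (ENNReal.add_le_add_iff_left hQfin).mp this

lemma sum_antitone_le (p : ℕ → ℝ) (hp : Antitone p) (A : Finset ℕ) :
    ∑ n ∈ A, p n ≤ ∑ n ∈ range A.card, p n := by
  set k := A.card with hk
  let f : Fin k ↪o ℕ := A.orderEmbOfFin hk.symm
  have hfi : ∀ i : Fin k, (i : ℕ) ≤ f i := by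
    intro i
    obtain ⟨m, hm⟩ := i
    induction m with
    | zero => exact Nat.zero_le _
    | succ m ih =>
      have hm' : m < k := Nat.lt_of_succ_lt hm
      have h1 := ih hm'
      have h2 : f ⟨m, hm'⟩ < f ⟨m+1, hm⟩ := f.strictMono (by simp [Fin.lt_def])
      simp only [Fin.val_mk] at h1 h2 ⊢; omega
  have hA : A = Finset.image f Finset.univ := by
    apply Finset.coe_injective
    rw [Finset.coe_image, Finset.coe_univ, Set.image_univ, Finset.range_orderEmbOfFin]
  rw [hA, Finset.sum_image (fun a _ b _ h => f.injective h)]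
  calc ∑ i : Fin k, p (f i) ≤ ∑ i : Fin k, p (i : ℕ) :=
        Finset.sum_le_sum fun i _ => hp (hfi i)
    _ = ∑ n ∈ range k, p n := Fin.sum_univ_eq_sum_range _ _

lemma head_le (θ : ℤ → ℝ) (σ τ : ℕ ≃ ℤ)
    (hp : Antitone (fun n => θ (σ n))) (k : ℕ) :
    ∑ n ∈ range k, θ (τ n) ≤ ∑ n ∈ range k, θ (σ n) := by
  have hinj : Function.Injective (fun n => σ.symm (τ n)) := fun a b h => by
    have := congrArg σ (congrArg τ.symm (congrArg σ h)); simpa using this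
  have h1 : ∑ n ∈ range k, θ (τ n)
      = ∑ m ∈ (range k).image (fun n => σ.symm (τ n)), θ (σ m) := by
    rw [Finset.sum_image (fun a _ b _ h => hinj h)]
    exact Finset.sum_congr rfl fun x _ => by rw [Equiv.apply_symm_apply]
  rw [h1]
  have hcard : ((range k).image (fun n => σ.symm (τ n))).card = k := by
    rw [Finset.card_image_of_injective _ hinj, card_range]
  calc _ ≤ ∑ n ∈ range (((range k).image (fun n => σ.symm (τ n))).card), θ (σ n) :=
        sum_antitone_le _ hp _
    _ = _ := by rw [hcard]

lemma real_rearrange (c : ℕ → ℝ) (hc : Monotone c) (hc0 : c 0 = 0) (hcnn : ∀ n, 0 ≤ c n)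
    (p q : ℕ → ℝ) (hpnn : ∀ n, 0 ≤ p n) (hqnn : ∀ n, 0 ≤ q n)
    (hsp : Summable p) (hsq : Summable q)
    (htot : ∑' n, p n = ∑' n, q n)
    (hhead : ∀ k, ∑ n ∈ range k, q n ≤ ∑ n ∈ range k, p n)
    (hs1 : Summable (fun n => c n * p n)) (hs2 : Summable (fun n => c n * q n)) :
    ∑' n, c n * p n ≤ ∑' n, c n * q n := by
  have key : ENNReal.ofReal (∑' n, c n * p n) ≤ ENNReal.ofReal (∑' n, c n * q n) := by
    rw [ENNReal.ofReal_tsum_of_nonneg (fun n => mul_nonneg (hcnn n) (hpnn n)) hs1,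
        ENNReal.ofReal_tsum_of_nonneg (fun n => mul_nonneg (hcnn n) (hqnn n)) hs2]
    have hmul : ∀ (r : ℕ → ℝ) (n : ℕ),
        ENNReal.ofReal (c n * r n) = ENNReal.ofReal (c n) * ENNReal.ofReal (r n) :=
      fun r n => ENNReal.ofReal_mul (hcnn n)
    calc ∑' n, ENNReal.ofReal (c n * p n)
        = ∑' n, ENNReal.ofReal (c n) * ENNReal.ofReal (p n) := tsum_congr (hmul p)
      _ ≤ ∑' n, ENNReal.ofReal (c n) * ENNReal.ofReal (q n) := by
          refine ennreal_rearrange _ (fun a b h => ENNReal.ofReal_le_ofReal (hc h))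
            (by rw [hc0, ENNReal.ofReal_zero]) _ _ ?_ ?_ ?_
          · rw [← ENNReal.ofReal_tsum_of_nonneg hpnn hsp,
              ← ENNReal.ofReal_tsum_of_nonneg hqnn hsq, htot]
          · rw [← ENNReal.ofReal_tsum_of_nonneg hqnn hsq]; exact ENNReal.ofReal_ne_top
          · intro k
            rw [← ENNReal.ofReal_sum_of_nonneg (fun i _ => hpnn i),
              ← ENNReal.ofReal_sum_of_nonneg (fun i _ => hqnn i)]
            exact ENNReal.ofReal_le_ofReal (hhead k)
      _ = ∑' n, ENNReal.ofReal (c n * q n) := (tsum_congr (hmul q)).symm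
  exact (ENNReal.ofReal_le_ofReal_iff
    (tsum_nonneg fun n => mul_nonneg (hcnn n) (hqnn n))).mp key

theorem stmt9 (g : ℕ → ℝ) (hg : Monotone g) (hg0 : g 0 = 0) (hgnn : ∀ k, 0 ≤ g k)
    (X : Finset ℤ) (b : ℤ) (hb : b ∈ X)
    (θ : ℤ → ℝ) (hθ : IsPmf θ) (hasu : ASU θ b)
    (hsumm : ∀ a : ℤ, Summable (fun x : ℤ => g (x - a).natAbs * θ x)) :
    (∀ a ∈ X, ∑' x : ℤ, g (x - b).natAbs * θ x ≤ ∑' x : ℤ, g (x - a).natAbs * θ x) ∧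
    ∑' x : ℤ, g (x - b).natAbs * θ x =
      ∑' n : ℕ, g (sp (n + 1)).natAbs * θ (b + sp (n + 1)) := by
  obtain ⟨hθnn, hθ1⟩ := hθ
  have hθs : Summable θ := hθ1.summable
  set c : ℕ → ℝ := fun n => g ((spE n).natAbs) with hc_def
  have hcmono : Monotone c := fun m n h => hg (by
    rw [natAbs_spE, natAbs_spE]; exact Nat.div_le_div_right (by omega))
  have hc0 : c 0 = 0 := by
    have h0 : (spE 0).natAbs = 0 := by rw [natAbs_spE]
    rw [hc_def]; simp only [h0]; exact hg0
  have hcnn : ∀ n, 0 ≤ c n := fun n => hgnn _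
  -- reindexing along an enumeration centered at `a`
  have reidx : ∀ (a : ℤ) (σ : ℕ ≃ ℤ), (∀ n, ((σ n) - a).natAbs = (spE n).natAbs) →
      ∑' x : ℤ, g (x - a).natAbs * θ x = ∑' n : ℕ, c n * θ (σ n) := by
    intro a σ hd
    rw [← Equiv.tsum_eq σ (fun x => g (x - a).natAbs * θ x)]
    exact tsum_congr fun n => by rw [hd n]
  have sidx : ∀ (a : ℤ) (σ : ℕ ≃ ℤ), (∀ n, ((σ n) - a).natAbs = (spE n).natAbs) →
      Summable (fun n => c n * θ (σ n)) := by
    intro a σ hd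
    have h := (σ.summable_iff (f := fun x => g (x - a).natAbs * θ x)).mpr (hsumm a)
    exact h.congr fun n => by show g _ * _ = _; rw [hd n]
  -- the shifted enumerations
  have shiftd : ∀ a : ℤ, ∀ n, ((spE.trans (Equiv.addLeft a)) n - a).natAbs = (spE n).natAbs := by
    intro a n
    show ((a + spE n) - a).natAbs = _
    rw [add_sub_cancel_left]
  have mird : ∀ n, ((spE.trans ((Equiv.neg ℤ).trans (Equiv.addLeft b))) n - b).natAbs
      = (spE n).natAbs := by
    intro n
    show ((b + -(spE n)) - b).natAbs = _
    rw [add_sub_cancel_left, Int.natAbs_neg]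
  -- choose the b-centered enumeration according to ASU
  obtain ⟨σb, hσbd, hσbanti⟩ :
      ∃ σb : ℕ ≃ ℤ, (∀ n, ((σb n) - b).natAbs = (spE n).natAbs) ∧
        Antitone (fun n => θ (σb n)) := by
    rcases hasu with h | h
    · exact ⟨spE.trans (Equiv.addLeft b), shiftd b, h⟩
    · refine ⟨spE.trans ((Equiv.neg ℤ).trans (Equiv.addLeft b)), mird, ?_⟩
      have : (fun n => θ ((spE.trans ((Equiv.neg ℤ).trans (Equiv.addLeft b))) n))
          = fun n : ℕ => θ (b - sp (n + 1)) := by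
        funext n; show θ (b + -(sp (n+1))) = _; rw [← sub_eq_add_neg]
      rw [this]; exact h
  constructor
  · intro a ha
    set σa : ℕ ≃ ℤ := spE.trans (Equiv.addLeft a)
    rw [reidx b σb hσbd, reidx a σa (shiftd a)]
    refine real_rearrange c hcmono hc0 hcnn _ _ (fun n => hθnn _) (fun n => hθnn _)
      ((σb.summable_iff (f := θ)).mpr hθs) ((σa.summable_iff (f := θ)).mpr hθs) ?_
      (head_le θ σb σa hσbanti) (sidx b σb hσbd) (sidx a σa (shiftd a))
    rw [Equiv.tsum_eq σb θ, Equiv.tsum_eq σa θ]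
  · rw [reidx b (spE.trans (Equiv.addLeft b)) (shiftd b)]
    exact tsum_congr fun n => rfl
end

section
/- Let θ, θ̃ be pmfs on ℤ with θ ≺ θ̃ and θ̃ a.s.u. about some b ∈ X, where X ⊆ ℤ is finite and contains b. Let ρ(x,a) = g(|x−a|) with g non-decreasing and g(0)=0. Then min_{a∈X} Σ_x ρ(x,a) θ̃(x) ≤ min_{a∈X} Σ_x ρ(x,a) θ(x). -/
open scoped BigOperators

/- ### Auxiliary material -/

/-- The spiral shifted by one: a bijection ℕ → ℤ. -/
def esp (n : ℕ) : ℤ := sp (n + 1)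

def espInv (z : ℤ) : ℕ := if 0 < z then 2 * z.toNat - 1 else 2 * (-z).toNat

lemma esp_even (m : ℕ) : esp (2 * m) = -(m : ℤ) := by
  simp only [esp, sp]
  rw [if_neg (by omega)]
  have h : (2 * m + 1) / 2 = m := by omega
  rw [h]

lemma esp_odd (m : ℕ) : esp (2 * m + 1) = (m : ℤ) + 1 := by
  simp only [esp, sp]
  rw [if_pos (by omega)]
  have h : (2 * m + 1 + 1) / 2 = m + 1 := by omega
  rw [h]; push_cast; ring

lemma esp_leftInv : Function.LeftInverse espInv esp := by
  intro n
  rcases Nat.even_or_odd n with ⟨m, hm⟩ | ⟨m, hm⟩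
  · rw [show n = 2 * m from by omega, esp_even]
    unfold espInv; split_ifs with h <;> omega
  · rw [show n = 2 * m + 1 from by omega, esp_odd]
    unfold espInv; split_ifs with h <;> omega

lemma esp_rightInv : Function.RightInverse espInv esp := by
  intro z
  unfold espInv
  split_ifs with h
  · rw [show 2 * z.toNat - 1 = 2 * (z.toNat - 1) + 1 from by omega, esp_odd]; omega
  · rw [esp_even]; omega

lemma esp_bij : Function.Bijective esp :=
  ⟨esp_leftInv.injective, esp_rightInv.surjective⟩

lemma esp_image (k : ℕ) :
    (Finset.range (2 * k + 1)).image esp = Finset.Icc (-(k : ℤ)) k := by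
  apply Finset.eq_of_subset_of_card_le
  · intro z hz
    simp only [Finset.mem_image, Finset.mem_range] at hz
    obtain ⟨n, hn, rfl⟩ := hz
    simp only [Finset.mem_Icc]
    rcases Nat.even_or_odd n with ⟨m, hm⟩ | ⟨m, hm⟩
    · rw [show n = 2 * m from by omega, esp_even]; omega
    · rw [show n = 2 * m + 1 from by omega, esp_odd]; omega
  · rw [Finset.card_image_of_injective _ esp_bij.injective, Finset.card_range, Int.card_Icc]
    omega

lemma fin_le_of_strictMono {m : ℕ} {f : Fin m → ℕ} (hf : StrictMono f) (i : Fin m) :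
    (i : ℕ) ≤ f i := by
  obtain ⟨v, hv⟩ := i
  induction v with
  | zero => exact Nat.zero_le _
  | succ k ih =>
    have hk : k < m := by omega
    have h1 : f ⟨k, hk⟩ < f ⟨k + 1, hv⟩ := hf (by simp [Fin.lt_def])
    exact Nat.succ_le_of_lt (lt_of_le_of_lt (ih hk) h1)

/-- Sum of an antitone sequence over any finset is at most the sum over an initial segment
of the same size. -/
lemma sum_le_sum_range_of_antitone (c : ℕ → ℝ) (hc : Antitone c) (S : Finset ℕ) :
    ∑ i ∈ S, c i ≤ ∑ i ∈ Finset.range S.card, c i := by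
  classical
  rw [← Fin.sum_univ_eq_sum_range]
  have himg : S = Finset.image (fun j : Fin S.card => S.orderEmbOfFin rfl j) Finset.univ := by
    symm
    apply Finset.eq_of_subset_of_card_le
    · intro z hz
      simp only [Finset.mem_image] at hz
      obtain ⟨j, _, rfl⟩ := hz
      exact Finset.orderEmbOfFin_mem S rfl j
    · rw [Finset.card_image_of_injective _ (S.orderEmbOfFin rfl).injective]
      simp
  calc ∑ i ∈ S, c i
      = ∑ j : Fin S.card, c (S.orderEmbOfFin rfl j) := by
        conv_lhs => rw [himg]
        rw [Finset.sum_image (fun x _ y _ h => (S.orderEmbOfFin rfl).injective h)]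
    _ ≤ ∑ j : Fin S.card, c j :=
        Finset.sum_le_sum fun j _ =>
          hc (fin_le_of_strictMono (S.orderEmbOfFin rfl).strictMono j)

/-- Top-m sums of an a.s.u. (along a bijective enumeration) function bound arbitrary sums. -/
lemma sum_le_sum_range_enum (θt : ℤ → ℝ) (e : ℕ → ℤ) (he : Function.Bijective e)
    (hanti : Antitone fun n => θt (e n)) (B : Finset ℤ) :
    ∑ x ∈ B, θt x ≤ ∑ n ∈ Finset.range B.card, θt (e n) := by
  classical
  set E := Equiv.ofBijective e he with hE
  set S := B.map E.symm.toEmbedding with hS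
  have hcard : S.card = B.card := Finset.card_map _
  have h1 : ∑ x ∈ B, θt x = ∑ i ∈ S, θt (e i) := by
    rw [hS, Finset.sum_map]
    apply Finset.sum_congr rfl
    intro x _
    simp [hE, Equiv.ofBijective_apply_symm_apply]
  rw [h1, ← hcard]
  exact sum_le_sum_range_of_antitone _ hanti S

lemma card_Icc_int (a : ℤ) (j : ℕ) : (Finset.Icc (a - j) (a + j)).card = 2 * j + 1 := by
  rw [Int.card_Icc]; omega

/-- The key comparison: under ASU about b, any sum of `θt` over `2j+1` points is at most
the sum over the interval of radius `j` around `b`. -/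
lemma sum_le_icc_of_asu (θt : ℤ → ℝ) (b : ℤ) (hasu : ASU θt b)
    (B : Finset ℤ) (j : ℕ) (hcard : B.card = 2 * j + 1) :
    ∑ x ∈ B, θt x ≤ ∑ x ∈ Finset.Icc (b - j) (b + j), θt x := by
  classical
  have hicc : ∀ (e : ℕ → ℤ), (∀ n, e n = b + esp n) ∨ (∀ n, e n = b - esp n) →
      (Finset.range (2 * j + 1)).image e = Finset.Icc (b - j) (b + j) := by
    rintro e (h | h)
    all_goals {
      apply Finset.eq_of_subset_of_card_le
      · intro z hz
        simp only [Finset.mem_image, Finset.mem_range] at hz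
        obtain ⟨n, hn, rfl⟩ := hz
        have : esp n ∈ Finset.Icc (-(j : ℤ)) j := by
          rw [← esp_image j]
          exact Finset.mem_image_of_mem _ (Finset.mem_range.mpr hn)
        simp only [Finset.mem_Icc] at this ⊢
        rw [h n]; omega
      · rw [card_Icc_int, Finset.card_image_of_injective, Finset.card_range]
        intro x y hxy
        apply esp_bij.injective
        rw [h x, h y] at hxy
        omega }
  rcases hasu with hA | hA
  · set e : ℕ → ℤ := fun n => b + esp n with he
    have hbij : Function.Bijective e := by
      have : e = (fun z => b + z) ∘ esp := rfl
      rw [this]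
      exact (Equiv.addLeft b).bijective.comp esp_bij
    have h1 := sum_le_sum_range_enum θt e hbij hA B
    rw [hcard] at h1
    calc ∑ x ∈ B, θt x ≤ ∑ n ∈ Finset.range (2 * j + 1), θt (e n) := h1
      _ = ∑ x ∈ (Finset.range (2 * j + 1)).image e, θt x := by
          rw [Finset.sum_image]
          intro x _ y _ h
          exact hbij.injective h
      _ = ∑ x ∈ Finset.Icc (b - j) (b + j), θt x := by
          rw [hicc e (Or.inl fun n => rfl)]
  · set e : ℕ → ℤ := fun n => b - esp n with he
    have hbij : Function.Bijective e := by
      have : e = (fun z => b - z) ∘ esp := rfl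
      rw [this]
      exact (Equiv.subLeft b).bijective.comp esp_bij
    have h1 := sum_le_sum_range_enum θt e hbij hA B
    rw [hcard] at h1
    calc ∑ x ∈ B, θt x ≤ ∑ n ∈ Finset.range (2 * j + 1), θt (e n) := h1
      _ = ∑ x ∈ (Finset.range (2 * j + 1)).image e, θt x := by
          rw [Finset.sum_image]
          intro x _ y _ h
          exact hbij.injective h
      _ = ∑ x ∈ Finset.Icc (b - j) (b + j), θt x := by
          rw [hicc e (Or.inr fun n => rfl)]

/-- Layer-cake formula in `ℝ≥0∞`. -/
lemma layercake (θ : ℤ → ℝ) (hnn : ∀ x, 0 ≤ θ x) (hsum : HasSum θ 1)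
    (g : ℕ → ℝ) (hg : Monotone g) (hg0 : g 0 = 0) (a : ℤ)
    (hs : Summable fun x : ℤ => g (x - a).natAbs * θ x) :
    ENNReal.ofReal (∑' x : ℤ, g (x - a).natAbs * θ x)
      = ∑' j : ℕ, ENNReal.ofReal (g (j + 1) - g j) *
          ENNReal.ofReal (1 - ∑ x ∈ Finset.Icc (a - (j : ℤ)) (a + (j : ℤ)), θ x) := by
  classical
  have hgnn : ∀ k, 0 ≤ g k := fun k => hg0 ▸ hg (Nat.zero_le k)
  have hdnn : ∀ j, 0 ≤ g (j + 1) - g j := fun j => sub_nonneg.2 (hg (Nat.le_succ j))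
  rw [ENNReal.ofReal_tsum_of_nonneg (fun x => mul_nonneg (hgnn _) (hnn x)) hs]
  have step2 : ∀ x : ℤ, ENNReal.ofReal (g (x - a).natAbs * θ x)
      = ∑' j : ℕ, if j < (x - a).natAbs then ENNReal.ofReal ((g (j + 1) - g j) * θ x)
          else 0 := by
    intro x
    set m := (x - a).natAbs with hm
    rw [tsum_eq_sum (s := Finset.range m)
      (by intro j hj; rw [if_neg]; simpa using hj)]
    rw [Finset.sum_congr rfl (fun j hj => if_pos (Finset.mem_range.mp hj))]
    rw [← ENNReal.ofReal_sum_of_nonneg (fun j _ => mul_nonneg (hdnn j) (hnn x))]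
    rw [← Finset.sum_mul, Finset.sum_range_sub (fun j => g j), hg0, sub_zero]
  rw [tsum_congr step2, ENNReal.tsum_comm]
  apply tsum_congr
  intro j
  have step3 : ∀ x : ℤ,
      (if j < (x - a).natAbs then ENNReal.ofReal ((g (j + 1) - g j) * θ x) else 0)
      = ENNReal.ofReal (g (j + 1) - g j) *
          (if j < (x - a).natAbs then ENNReal.ofReal (θ x) else 0) := by
    intro x
    split_ifs with h
    · exact ENNReal.ofReal_mul (hdnn j)
    · rw [mul_zero]
  rw [tsum_congr step3, ENNReal.tsum_mul_left]
  congr 1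
  -- the tail identity
  set s := Finset.Icc (a - (j : ℤ)) (a + (j : ℤ)) with hsdef
  have hcond : ∀ x : ℤ, (j < (x - a).natAbs) ↔ x ∉ s := by
    intro x
    simp only [hsdef, Finset.mem_Icc]
    omega
  have hsle : ∑ x ∈ s, θ x ≤ 1 := sum_le_hasSum s (fun x _ => hnn x) hsum
  have hsnn : 0 ≤ ∑ x ∈ s, θ x := Finset.sum_nonneg fun x _ => hnn x
  have hofone : ∑' x : ℤ, ENNReal.ofReal (θ x) = ENNReal.ofReal 1 := by
    rw [← ENNReal.ofReal_tsum_of_nonneg hnn hsum.summable, hsum.tsum_eq]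
  have hsplit : ∑' x : ℤ, ENNReal.ofReal (θ x)
      = (∑ x ∈ s, ENNReal.ofReal (θ x)) +
          ∑' x : ℤ, (if x ∈ s then 0 else ENNReal.ofReal (θ x)) := by
    have h : ∀ x : ℤ, ENNReal.ofReal (θ x)
        = (if x ∈ s then ENNReal.ofReal (θ x) else 0) +
            (if x ∈ s then 0 else ENNReal.ofReal (θ x)) := by
      intro x; split_ifs <;> simp
    rw [tsum_congr h, ENNReal.tsum_add]
    congr 1
    rw [tsum_eq_sum (s := s) (fun x hx => if_neg hx)]
    exact Finset.sum_congr rfl fun x hx => if_pos hx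
  have hsum_s : ∑ x ∈ s, ENNReal.ofReal (θ x) = ENNReal.ofReal (∑ x ∈ s, θ x) :=
    (ENNReal.ofReal_sum_of_nonneg fun x _ => hnn x).symm
  have hone : ENNReal.ofReal 1
      = ENNReal.ofReal (∑ x ∈ s, θ x) + ENNReal.ofReal (1 - ∑ x ∈ s, θ x) := by
    rw [← ENNReal.ofReal_add hsnn (by linarith)]
    ring_nf
  have hkey : ∑' x : ℤ, (if x ∈ s then 0 else ENNReal.ofReal (θ x))
      = ENNReal.ofReal (1 - ∑ x ∈ s, θ x) := by
    have := hsplit.symm.trans (hofone.trans hone)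
    rw [hsum_s] at this
    exact (ENNReal.add_right_inj ENNReal.ofReal_ne_top).1 this
  rw [← hkey]
  apply tsum_congr
  intro x
  by_cases h : x ∈ s
  · rw [if_neg (by rw [hcond]; simp [h]), if_pos h]
  · rw [if_pos ((hcond x).2 h), if_neg h]

theorem stmt10 (g : ℕ → ℝ) (hg : Monotone g) (hg0 : g 0 = 0) (hgnn : ∀ k, 0 ≤ g k)
    (X : Finset ℤ) (hX : X.Nonempty) (b : ℤ) (hb : b ∈ X)
    (θ θt : ℤ → ℝ) (hθ : IsPmf θ) (hθt : IsPmf θt)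
    (hmaj : Maj θ θt) (hasu : ASU θt b)
    (hsumm : ∀ a : ℤ, Summable (fun x : ℤ => g (x - a).natAbs * θ x))
    (hsummt : ∀ a : ℤ, Summable (fun x : ℤ => g (x - a).natAbs * θt x)) :
    X.inf' hX (fun a => ∑' x : ℤ, g (x - a).natAbs * θt x) ≤
    X.inf' hX (fun a => ∑' x : ℤ, g (x - a).natAbs * θ x) := by
  classical
  obtain ⟨hθnn, hθsum⟩ := hθ
  obtain ⟨hθtnn, hθtsum⟩ := hθt
  have main : ∀ a : ℤ, (∑' x : ℤ, g (x - b).natAbs * θt x) ≤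
      ∑' x : ℤ, g (x - a).natAbs * θ x := by
    intro a
    have htail : ∀ j : ℕ,
        (1 - ∑ x ∈ Finset.Icc (b - (j : ℤ)) (b + (j : ℤ)), θt x)
          ≤ 1 - ∑ x ∈ Finset.Icc (a - (j : ℤ)) (a + (j : ℤ)), θ x := by
      intro j
      have hle : ∑ x ∈ Finset.Icc (a - (j : ℤ)) (a + (j : ℤ)), θ x
          ≤ ∑ x ∈ Finset.Icc (b - (j : ℤ)) (b + (j : ℤ)), θt x := by
        obtain ⟨B, hBcard, hBle⟩ := hmaj (Finset.Icc (a - (j : ℤ)) (a + (j : ℤ)))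
        rw [card_Icc_int] at hBcard
        exact hBle.trans (sum_le_icc_of_asu θt b hasu B j hBcard)
      linarith
    have hofR : ENNReal.ofReal (∑' x : ℤ, g (x - b).natAbs * θt x)
        ≤ ENNReal.ofReal (∑' x : ℤ, g (x - a).natAbs * θ x) := by
      rw [layercake θt hθtnn hθtsum g hg hg0 b (hsummt b),
        layercake θ hθnn hθsum g hg hg0 a (hsumm a)]
      exact ENNReal.tsum_le_tsum fun j =>
        mul_le_mul_right (ENNReal.ofReal_le_ofReal (htail j)) _
    have hnn2 : 0 ≤ ∑' x : ℤ, g (x - a).natAbs * θ x :=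
      tsum_nonneg fun x => mul_nonneg (hgnn _) (hθnn x)
    exact (ENNReal.ofReal_le_ofReal_iff hnn2).1 hofR
  calc X.inf' hX (fun a => ∑' x : ℤ, g (x - a).natAbs * θt x)
      ≤ ∑' x : ℤ, g (x - b).natAbs * θt x := Finset.inf'_le _ hb
    _ ≤ X.inf' hX (fun a => ∑' x : ℤ, g (x - a).natAbs * θ x) :=
        Finset.le_inf' hX _ fun a _ => main a
end
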